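/- arXiv:1809.09354 — 4 statements merged into one kernel-verified Lean document; each statement's English description precedes it below -/
import Mathlib

section
/- If f : ℝⁿ → ℝ satisfies f(x + t eᵢ) ≤ f(x) + t ∇ᵢf(x) + (Lᵢ/2) t² for all x, t and each i ∈ [n] with constants Lᵢ > 0, then f is M-smooth with M = n · Diag(L₁, …, Lₙ), i.e., f(x+h) ≤ f(x) + ⟨∇f(x), h⟩ + (n/2) Σᵢ Lᵢ hᵢ² for all x, h ∈ ℝⁿ. -/
/-- If a convex `f` satisfies coordinate-wise smoothness with constants `Lᵢ > 0`,
then `f` is `M`-smooth with `M = n · Diag(L)`. -/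
theorem matrix_smoothness_of_coordinate_smoothness
    (n : ℕ)
    (f : (Fin n → ℝ) → ℝ) (g : (Fin n → ℝ) → (Fin n → ℝ))  -- g = gradient of f
    (hf : ConvexOn ℝ Set.univ f)
    (L : Fin n → ℝ) (hL : ∀ i, 0 < L i)
    (hcoord : ∀ (i : Fin n) (x : Fin n → ℝ) (t : ℝ),
      f (x + Pi.single i t) ≤ f x + t * g x i + L i / 2 * t ^ 2) :
    ∀ x h : Fin n → ℝ,
      f (x + h) ≤ f x + (∑ i, g x i * h i) + (n : ℝ) / 2 * ∑ i, L i * (h i) ^ 2 := by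
  intro x h
  rcases Nat.eq_zero_or_pos n with hn | hn
  · have hh : h = 0 := funext fun i => absurd i.isLt (by omega)
    simp [hh]
  have hn' : (0:ℝ) < n := by exact_mod_cast hn
  set w : Fin n → ℝ := fun _ => (n : ℝ)⁻¹ with hw
  set p : Fin n → (Fin n → ℝ) := fun i => x + Pi.single i ((n : ℝ) * h i) with hp
  have hsum : ∑ i, w i • p i = x + h := by
    have h1 : ∑ i : Fin n, w i • p i
        = ∑ i : Fin n, ((n:ℝ)⁻¹ • x + (Pi.single i (h i) : Fin n → ℝ)) := by
      refine Finset.sum_congr rfl fun i _ => ?_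
      have : (n:ℝ)⁻¹ • (Pi.single i ((n:ℝ) * h i) : Fin n → ℝ) = (Pi.single i (h i) : Fin n → ℝ) := by
        funext j
        rcases eq_or_ne j i with rfl | hj
        · simp; field_simp
        · simp [Pi.single_apply, hj]
      simp [hw, hp, smul_add, this]
    rw [h1, Finset.sum_add_distrib, Finset.sum_const, Finset.univ_sum_single]
    congr 1
    rw [Finset.card_univ, Fintype.card_fin]
    rw [← Nat.cast_smul_eq_nsmul ℝ, smul_smul, mul_inv_cancel₀ (ne_of_gt hn'), one_smul]
  have jensen := hf.map_sum_le (t := Finset.univ) (w := w) (p := p)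
    (fun i _ => by positivity)
    (by simp [hw, Finset.card_univ]; field_simp)
    (fun i _ => Set.mem_univ _)
  rw [hsum] at jensen
  refine jensen.trans ?_
  have key : ∀ i : Fin n, w i • f (p i)
      ≤ (n:ℝ)⁻¹ * f x + g x i * h i + (n:ℝ) / 2 * (L i * h i ^ 2) := by
    intro i
    have h2 := hcoord i x ((n:ℝ) * h i)
    have : w i • f (p i) ≤ (n:ℝ)⁻¹ * (f x + (n:ℝ) * h i * g x i + L i / 2 * ((n:ℝ) * h i) ^ 2) := by
      simp only [hw, hp, smul_eq_mul]
      exact mul_le_mul_of_nonneg_left h2 (by positivity)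
    refine this.trans_eq ?_
    field_simp
  calc ∑ i, w i • f (p i)
      ≤ ∑ i, ((n:ℝ)⁻¹ * f x + g x i * h i + (n:ℝ) / 2 * (L i * h i ^ 2)) :=
        Finset.sum_le_sum fun i _ => key i
    _ = f x + (∑ i, g x i * h i) + (n : ℝ) / 2 * ∑ i, L i * (h i) ^ 2 := by
        rw [Finset.sum_add_distrib, Finset.sum_add_distrib, Finset.sum_const,
          Finset.card_univ, Fintype.card_fin, ← Finset.mul_sum]
        congr 1
        congr 1
        rw [nsmul_eq_mul]
        field_simp
end

section
/- Let P, M ∈ ℝ^{n×n} be symmetric with P having positive diagonal entries pᵢ, and let D = Diag(p), P' = D^{-1/2} P D^{-1/2}, M' = D^{-1} M D^{-1}. Suppose P ∘ M is PSD. Then the vector v with vᵢ = λ_max(P' ∘ M') · pᵢ² satisfies the ESO inequality P ∘ M ⪯ Diag(p₁v₁, …, pₙvₙ); equivalently, P ∘ M ⪯ λ_max(P' ∘ M') · Diag(p)³. -/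
/-- The largest eigenvalue of a real matrix, as the supremum of its eigenvalue set. -/
noncomputable def lamMax {n : ℕ} (M : Matrix (Fin n) (Fin n) ℝ) : ℝ :=
  sSup {r : ℝ | ∃ v : Fin n → ℝ, v ≠ 0 ∧ M.mulVec v = r • v}

open scoped Matrix

lemma aux_le_psd {n : ℕ} {B : Matrix (Fin n) (Fin n) ℝ} (hB : B.IsHermitian)
    (c : ℝ) (hc : ∀ i, hB.eigenvalues i ≤ c) :
    (c • (1 : Matrix (Fin n) (Fin n) ℝ) - B).PosSemidef := by
  classical
  have hVV : (hB.eigenvectorUnitary : Matrix (Fin n) (Fin n) ℝ) *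
      star (hB.eigenvectorUnitary : Matrix (Fin n) (Fin n) ℝ) = 1 :=
    Matrix.mem_unitaryGroup_iff.mp hB.eigenvectorUnitary.2
  have hdiag : Matrix.diagonal (fun i => c - hB.eigenvalues i)
      = c • (1 : Matrix (Fin n) (Fin n) ℝ)
        - Matrix.diagonal (RCLike.ofReal ∘ hB.eigenvalues) := by
    ext i j
    by_cases h : i = j <;> simp [Matrix.diagonal, h, Matrix.one_apply]
  have hexp : (hB.eigenvectorUnitary : Matrix (Fin n) (Fin n) ℝ) *
        Matrix.diagonal (fun i => c - hB.eigenvalues i) *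
        star (hB.eigenvectorUnitary : Matrix (Fin n) (Fin n) ℝ) = c • 1 - B := by
    rw [hdiag, Matrix.mul_sub, Matrix.sub_mul,
      ← Unitary.conjStarAlgAut_apply (S := ℝ) _ (Matrix.diagonal (RCLike.ofReal ∘ hB.eigenvalues)),
      ← hB.spectral_theorem, mul_smul_comm,
      mul_one, smul_mul_assoc, hVV]
  rw [← hexp]
  have := (Matrix.posSemidef_diagonal_iff.mpr fun i => sub_nonneg.mpr (hc i)).mul_mul_conjTranspose_same
    (hB.eigenvectorUnitary : Matrix (Fin n) (Fin n) ℝ)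
  simpa [Matrix.star_eq_conjTranspose] using this

lemma lamMax_psd {n : ℕ} (hn : 0 < n) {B : Matrix (Fin n) (Fin n) ℝ} (hB : B.IsHermitian) :
    ((lamMax B) • (1 : Matrix (Fin n) (Fin n) ℝ) - B).PosSemidef := by
  classical
  have hne : Nonempty (Fin n) := ⟨⟨0, hn⟩⟩
  have hune : (Finset.univ : Finset (Fin n)).Nonempty := Finset.univ_nonempty
  set S := {r : ℝ | ∃ v : Fin n → ℝ, v ≠ 0 ∧ B.mulVec v = r • v} with hS
  set μ := Finset.univ.sup' hune hB.eigenvalues with hμ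
  have hc : ∀ i, hB.eigenvalues i ≤ μ := fun i => Finset.le_sup' _ (Finset.mem_univ i)
  have hpsd := aux_le_psd hB μ hc
  have hub : ∀ r ∈ S, r ≤ μ := by
    rintro r ⟨v, hv, hrv⟩
    have h0 := hpsd.dotProduct_mulVec_nonneg v
    have hmv : (μ • (1 : Matrix (Fin n) (Fin n) ℝ) - B).mulVec v = (μ - r) • v := by
      rw [Matrix.sub_mulVec, Matrix.smul_mulVec, Matrix.one_mulVec, hrv, sub_smul]
    rw [hmv] at h0
    simp only [star_trivial, dotProduct_smul, smul_eq_mul] at h0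
    have hvv : 0 < dotProduct v v := by
      rw [← star_trivial v]
      exact Matrix.dotProduct_star_self_pos_iff.mpr hv
    nlinarith
  obtain ⟨i, -, hi⟩ := Finset.exists_mem_eq_sup' hune hB.eigenvalues
  have hmem : μ ∈ S := by
    refine ⟨⇑(hB.eigenvectorBasis i), ?_, ?_⟩
    · intro h
      have := hB.eigenvectorBasis.orthonormal.ne_zero i
      exact this (by ext j; exact congrFun h j)
    · rw [hB.mulVec_eigenvectorBasis i, hμ, hi]
  have hsup : sSup S = μ := le_antisymm (csSup_le ⟨μ, hmem⟩ hub) (le_csSup ⟨μ, hub⟩ hmem)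
  rw [lamMax, ← hS, hsup]
  exact hpsd


/-- The vector `v` with `vᵢ = λ_max(P' ∘ M') pᵢ²` satisfies the ESO inequality;
equivalently `P ∘ M ⪯ λ_max(P' ∘ M') · Diag(p)³`. -/
theorem eso_from_lamMax
    (n : ℕ)
    (M P : Matrix (Fin n) (Fin n) ℝ)
    (hMsymm : M.IsSymm) (hPsymm : P.IsSymm)
    (hPM : (Matrix.hadamard P M).PosSemidef)
    (p : Fin n → ℝ) (hp : ∀ i, 0 < p i) (hPdiag : ∀ i, P i i = p i) :
    (lamMax (Matrix.hadamard
        (Matrix.diagonal (fun i => (Real.sqrt (p i))⁻¹) * P *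
          Matrix.diagonal (fun i => (Real.sqrt (p i))⁻¹))
        (Matrix.diagonal (fun i => (p i)⁻¹) * M * Matrix.diagonal (fun i => (p i)⁻¹)))
        • Matrix.diagonal (fun i => (p i) ^ 3)
      - Matrix.hadamard P M).PosSemidef := by
  classical
  rcases Nat.eq_zero_or_pos n with h0 | hn
  · subst h0
    constructor
    · ext i j; exact i.elim0
    · intro x; rw [Subsingleton.elim x 0]; simp
  have hps : ∀ i, Real.sqrt (p i) ≠ 0 := fun i => (Real.sqrt_pos.mpr (hp i)).ne'
  have hp0 : ∀ i, p i ≠ 0 := fun i => (hp i).ne'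
  have hsq : ∀ i, Real.sqrt (p i) * Real.sqrt (p i) = p i := fun i =>
    Real.mul_self_sqrt (hp i).le
  set A := Matrix.hadamard P M with hAdef
  set B := Matrix.hadamard
        (Matrix.diagonal (fun i => (Real.sqrt (p i))⁻¹) * P *
          Matrix.diagonal (fun i => (Real.sqrt (p i))⁻¹))
        (Matrix.diagonal (fun i => (p i)⁻¹) * M * Matrix.diagonal (fun i => (p i)⁻¹)) with hBdef
  set D : Matrix (Fin n) (Fin n) ℝ := Matrix.diagonal (fun i => Real.sqrt (p i) * p i) with hDdef
  have hBeq : B = Matrix.diagonal (fun i => (Real.sqrt (p i))⁻¹ * (p i)⁻¹) * A *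
      (Matrix.diagonal (fun i => (Real.sqrt (p i))⁻¹ * (p i)⁻¹))ᴴ := by
    rw [hBdef, hAdef]
    ext i j
    simp only [Matrix.hadamard_apply, Matrix.mul_diagonal, Matrix.diagonal_mul,
      Matrix.diagonal_conjTranspose, star_trivial, Pi.star_def]
    ring
  have hBpsd : B.PosSemidef := by
    rw [hBeq]; exact hPM.mul_mul_conjTranspose_same _
  have hmain := lamMax_psd hn hBpsd.1
  have key := hmain.mul_mul_conjTranspose_same D
  have hDD : D * Dᴴ = Matrix.diagonal (fun i => (p i) ^ 3) := by
    rw [hDdef, Matrix.diagonal_conjTranspose, Matrix.diagonal_mul_diagonal]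
    ext i j
    by_cases h : i = j
    · subst h
      simp only [Matrix.diagonal_apply_eq, Pi.mul_apply, Pi.star_apply, star_trivial]
      linear_combination (p i * p i) * hsq i
    · simp [Matrix.diagonal_apply_ne _ h]
  have hDBD : D * B * Dᴴ = A := by
    rw [hBeq, hDdef]
    ext i j
    simp only [Matrix.mul_diagonal, Matrix.diagonal_mul, Matrix.diagonal_conjTranspose,
      star_trivial, Pi.star_def]
    field_simp
    rw [div_eq_iff (mul_ne_zero (mul_ne_zero (mul_ne_zero (hps i) (hp0 i)) (hps j)) (hp0 j))]
    ring
  have hfinal : D * ((lamMax B) • 1 - B) * Dᴴ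
      = lamMax B • Matrix.diagonal (fun i => (p i) ^ 3) - A := by
    rw [Matrix.mul_sub, Matrix.sub_mul, mul_smul_comm, mul_one, smul_mul_assoc, hDD, hDBD]
  rw [← hfinal]
  exact key
end

section
/- With c₂ = λ_max(M + ((n−τ)/τ)Diag(M)) and c₃ = λ_max(M) + δ where δ = Trace-constrained parameter satisfying δ ≤ Trace(M)/τ and M symmetric PSD with positive diagonal, 1 ≤ τ < n, we have c₃ ≤ ((2n−τ)/(n−τ)) c₂. -/
open Matrix Finset

variable {n : ℕ}

private lemma shift_posSemidef {A : Matrix (Fin n) (Fin n) ℝ} (hA : A.IsHermitian) (μ : ℝ)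
    (hμ : ∀ i, hA.eigenvalues i ≤ μ) :
    (μ • (1 : Matrix (Fin n) (Fin n) ℝ) - A).PosSemidef := by
  have hU : (hA.eigenvectorUnitary : Matrix (Fin n) (Fin n) ℝ) *
      star (hA.eigenvectorUnitary : Matrix (Fin n) (Fin n) ℝ) = 1 :=
    Matrix.mem_unitaryGroup_iff.mp hA.eigenvectorUnitary.2
  have key : μ • (1 : Matrix (Fin n) (Fin n) ℝ) - A =
      (hA.eigenvectorUnitary : Matrix (Fin n) (Fin n) ℝ) *
        Matrix.diagonal (fun i => μ - hA.eigenvalues i) *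
        star (hA.eigenvectorUnitary : Matrix (Fin n) (Fin n) ℝ) := by
    have hd : Matrix.diagonal (fun i : Fin n => μ - hA.eigenvalues i) =
        μ • (1 : Matrix (Fin n) (Fin n) ℝ) -
          Matrix.diagonal (RCLike.ofReal ∘ hA.eigenvalues) := by
      ext i j
      by_cases h : i = j <;> simp [h, Matrix.diagonal, Matrix.one_apply]
    have hs := hA.spectral_theorem
    simp only [Unitary.conjStarAlgAut_apply, Unitary.coe_star] at hs
    rw [hd, Matrix.mul_sub, Matrix.sub_mul, ← hs]
    congr 1
    rw [Matrix.mul_smul, Matrix.smul_mul, mul_one, hU]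
  rw [key]
  exact (Matrix.posSemidef_diagonal_iff.mpr fun i =>
    sub_nonneg.mpr (hμ i)).mul_mul_conjTranspose_same _

private lemma eig_le {A : Matrix (Fin n) (Fin n) ℝ} (hA : A.IsHermitian) (μ : ℝ)
    (hμ : ∀ i, hA.eigenvalues i ≤ μ) {r : ℝ} {v : Fin n → ℝ} (hv : v ≠ 0)
    (h : A.mulVec v = r • v) : r ≤ μ := by
  have hP := (shift_posSemidef hA μ hμ).dotProduct_mulVec_nonneg v
  have hmv : (μ • (1 : Matrix (Fin n) (Fin n) ℝ) - A).mulVec v = (μ - r) • v := by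
    rw [Matrix.sub_mulVec, Matrix.smul_mulVec, Matrix.one_mulVec, h, sub_smul]
  rw [hmv] at hP
  have hvv : 0 < v ⬝ᵥ v := by
    have h0 : v ⬝ᵥ v ≠ 0 := fun h0 => hv (dotProduct_self_eq_zero.mp h0)
    have h1 : 0 ≤ v ⬝ᵥ v := Finset.sum_nonneg fun i _ => mul_self_nonneg _
    exact lt_of_le_of_ne h1 (Ne.symm h0)
  have : (0:ℝ) ≤ (μ - r) * (v ⬝ᵥ v) := by
    simpa [dotProduct_smul, smul_eq_mul] using hP
  nlinarith

private lemma mem_eigset {A : Matrix (Fin n) (Fin n) ℝ} (hA : A.IsHermitian) (j : Fin n) :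
    hA.eigenvalues j ∈ {r : ℝ | ∃ v : Fin n → ℝ, v ≠ 0 ∧ A.mulVec v = r • v} := by
  refine ⟨⇑(hA.eigenvectorBasis j), ?_, hA.mulVec_eigenvectorBasis j⟩
  intro h0
  have hnorm := hA.eigenvectorBasis.orthonormal.1 j
  rw [show (hA.eigenvectorBasis j : EuclideanSpace ℝ (Fin n)) = 0 from (WithLp.ofLp_injective 2).eq_iff.mp (by simpa using h0)] at hnorm
  simp at hnorm

/-- For a Hermitian real matrix (n > 0), `lamMax` equals the max of the eigenvalues. -/
private lemma lamMax_eq {A : Matrix (Fin n) (Fin n) ℝ} (hn : 0 < n) (hA : A.IsHermitian) :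
    lamMax A = Finset.univ.sup' (Finset.univ_nonempty_iff.mpr ⟨⟨0, hn⟩⟩) hA.eigenvalues := by
  set μ := Finset.univ.sup' (Finset.univ_nonempty_iff.mpr ⟨⟨0, hn⟩⟩) hA.eigenvalues with hμdef
  have hμ : ∀ i, hA.eigenvalues i ≤ μ := fun i => Finset.le_sup' _ (Finset.mem_univ i)
  obtain ⟨j, -, hj⟩ := Finset.exists_mem_eq_sup' (Finset.univ_nonempty_iff.mpr ⟨⟨0, hn⟩⟩)
    hA.eigenvalues
  apply le_antisymm
  · exact csSup_le ⟨_, mem_eigset hA ⟨0, hn⟩⟩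
      (fun r ⟨v, hv, hvr⟩ => eig_le hA μ hμ hv hvr)
  · rw [hμdef, hj]
    exact le_csSup ⟨μ, fun r ⟨v, hv, hvr⟩ => eig_le hA μ hμ hv hvr⟩ (mem_eigset hA j)

private lemma lamMax_mono {A B : Matrix (Fin n) (Fin n) ℝ} (hn : 0 < n)
    (hA : A.IsHermitian) (hB : B.IsHermitian) (h : (B - A).PosSemidef) :
    lamMax A ≤ lamMax B := by
  rw [lamMax_eq hn hA, lamMax_eq hn hB]
  apply Finset.sup'_le
  intro i _
  set v := ⇑(hA.eigenvectorBasis i) with hv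
  obtain ⟨w, hw, hwr⟩ := mem_eigset hA i
  have hμB : ∀ k, hB.eigenvalues k ≤ Finset.univ.sup'
      (Finset.univ_nonempty_iff.mpr ⟨⟨0, hn⟩⟩) hB.eigenvalues :=
    fun k => Finset.le_sup' _ (Finset.mem_univ k)
  -- r := eigenvalue of A; show r ≤ max eig of B using quadratic forms
  have hwP := h.dotProduct_mulVec_nonneg w
  -- w ⬝ (A w) = r * (w⬝w); w ⬝ (B w) ≤ μB * (w⬝w)
  have hww : 0 < w ⬝ᵥ w := by
    have h0 : w ⬝ᵥ w ≠ 0 := fun h0 => hw (dotProduct_self_eq_zero.mp h0)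
    exact lt_of_le_of_ne (Finset.sum_nonneg fun i _ => mul_self_nonneg _) (Ne.symm h0)
  set μB := Finset.univ.sup' (Finset.univ_nonempty_iff.mpr ⟨⟨0, hn⟩⟩) hB.eigenvalues
  have hBshift := (shift_posSemidef hB μB hμB).dotProduct_mulVec_nonneg w
  have hAle : hA.eigenvalues i * (w ⬝ᵥ w) = w ⬝ᵥ A.mulVec w := by
    rw [hwr]; simp [dotProduct_smul, smul_eq_mul]
  have hABle : w ⬝ᵥ A.mulVec w ≤ w ⬝ᵥ B.mulVec w := by
    have : 0 ≤ w ⬝ᵥ (B - A).mulVec w := by simpa using hwP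
    rw [Matrix.sub_mulVec, dotProduct_sub] at this
    linarith
  have hBle : w ⬝ᵥ B.mulVec w ≤ μB * (w ⬝ᵥ w) := by
    have : 0 ≤ w ⬝ᵥ (μB • (1 : Matrix (Fin n) (Fin n) ℝ) - B).mulVec w := by
      simpa using hBshift
    rw [Matrix.sub_mulVec, dotProduct_sub, Matrix.smul_mulVec,
      Matrix.one_mulVec, dotProduct_smul, smul_eq_mul] at this
    linarith
  nlinarith

/-- Comparison of the complexity constants `c₂ = λ_max(M + ((n−τ)/τ)Diag(M))` and
`c₃ = λ_max(M) + δ` with `δ ≤ Trace(M)/τ`: `c₃ ≤ ((2n−τ)/(n−τ)) c₂`. -/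
theorem c3_le_c2
    (n : ℕ) (hn : 0 < n)
    (M : Matrix (Fin n) (Fin n) ℝ) (hM : M.PosSemidef) (hMdiag : ∀ i, 0 < M i i)
    (τ : ℝ) (hτ1 : 1 ≤ τ) (hτn : τ < n)
    (δ : ℝ) (hδ0 : 0 < δ) (hδ : δ ≤ Matrix.trace M / τ) :
    lamMax M + δ ≤
      ((2 * (n : ℝ) - τ) / ((n : ℝ) - τ)) *
        lamMax (M + (((n : ℝ) - τ) / τ) • Matrix.diagonal (fun i => M i i)) := by
  have hτ0 : (0:ℝ) < τ := lt_of_lt_of_le one_pos hτ1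
  have hnτ : (0:ℝ) < (n:ℝ) - τ := sub_pos.mpr hτn
  set c : ℝ := ((n:ℝ) - τ) / τ with hc
  have hc0 : 0 < c := div_pos hnτ hτ0
  set D : Matrix (Fin n) (Fin n) ℝ := Matrix.diagonal (fun i => M i i) with hD
  have hDpsd : (c • D).PosSemidef := by
    rw [hD, ← Matrix.diagonal_smul]
    exact Matrix.posSemidef_diagonal_iff.mpr fun i => by
      simpa using mul_nonneg hc0.le (hMdiag i).le
  have hSum : (M + c • D).IsHermitian := hM.isHermitian.add hDpsd.isHermitian
  set K := lamMax (M + c • D) with hK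
  -- lamMax M ≤ K
  have h1 : lamMax M ≤ K := lamMax_mono hn hM.isHermitian hSum (by simpa using hDpsd)
  -- c * max diag ≤ K
  have hne : (Finset.univ : Finset (Fin n)).Nonempty := Finset.univ_nonempty_iff.mpr ⟨⟨0, hn⟩⟩
  obtain ⟨j, -, hj⟩ := Finset.exists_mem_eq_sup' hne (fun i => M i i)
  set m := Finset.univ.sup' hne (fun i => M i i) with hm
  have hm0 : 0 < m := hj ▸ hMdiag j
  have h2 : c * m ≤ K := by
    have hcd : lamMax (c • D) ≤ K := lamMax_mono hn hDpsd.isHermitian hSum (by simpa using hM)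
    refine le_trans ?_ hcd
    -- c*m is an eigenvalue of c•D with eigenvector Pi.single j 1
    have hmem : c * m ∈ {r : ℝ | ∃ v : Fin n → ℝ, v ≠ 0 ∧ (c • D).mulVec v = r • v} := by
      refine ⟨Pi.single j 1, ?_, ?_⟩
      · intro h0
        have := congr_fun h0 j
        simp at this
      · rw [hD, ← Matrix.diagonal_smul, Matrix.mulVec_single]
        ext i
        by_cases h : i = j <;> simp [h, hj, Pi.single_apply, mul_comm]
    have hbdd : BddAbove {r : ℝ | ∃ v : Fin n → ℝ, v ≠ 0 ∧ (c • D).mulVec v = r • v} := by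
      refine ⟨Finset.univ.sup' hne hDpsd.isHermitian.eigenvalues,
        fun r ⟨v, hv, hvr⟩ => eig_le hDpsd.isHermitian _
          (fun i => Finset.le_sup' _ (Finset.mem_univ i)) hv hvr⟩
    exact le_csSup hbdd hmem
  -- δ ≤ n * m / τ
  have htr : Matrix.trace M ≤ (n:ℝ) * m := by
    rw [Matrix.trace]
    calc ∑ i, M.diag i ≤ ∑ _i : Fin n, m :=
          Finset.sum_le_sum fun i _ => Finset.le_sup' _ (Finset.mem_univ i)
      _ = (n:ℝ) * m := by simp [mul_comm]
  have h3 : δ ≤ (n:ℝ) * m / τ := le_trans hδ (div_le_div_of_nonneg_right htr hτ0.le)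
  -- combine
  have hK0 : 0 ≤ K := le_trans (mul_nonneg hc0.le hm0.le) h2
  have hnm : (n:ℝ) * m / τ = ((n:ℝ) / ((n:ℝ) - τ)) * (c * m) := by
    rw [hc]
    field_simp
  have h4 : δ ≤ ((n:ℝ) / ((n:ℝ) - τ)) * K := by
    rw [hnm] at h3
    exact h3.trans (mul_le_mul_of_nonneg_left h2 (by positivity : (0:ℝ) ≤ (n:ℝ)/((n:ℝ)-τ)))
  have : lamMax M + δ ≤ K + ((n:ℝ) / ((n:ℝ) - τ)) * K := add_le_add h1 h4
  refine this.trans (le_of_eq ?_)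
  field_simp
  ring
end

section
/- With c₁ = (n/τ)² λ_max(((τ−1)/(n−1))M + ((n−τ)/(n−1))Diag(M)) and c₂ = λ_max(M + ((n−τ)/τ)Diag(M)), for M symmetric PSD with positive diagonal and 2 ≤ τ ≤ n, it holds that c₂ ≤ ((n−1)τ/(n(τ−1))) c₁ ≤ 2 c₁. -/
open Matrix

lemma eigSet_bddAbove {n : ℕ} (B : Matrix (Fin n) (Fin n) ℝ) :
    BddAbove {r : ℝ | ∃ v : Fin n → ℝ, v ≠ 0 ∧ B.mulVec v = r • v} := by
  refine ⟨∑ i, ∑ j, |B i j|, ?_⟩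
  rintro r ⟨v, hv, hBv⟩
  obtain ⟨i0, hi0⟩ := Function.ne_iff.mp hv
  obtain ⟨i, -, hi⟩ := Finset.exists_max_image Finset.univ (fun i => |v i|)
    ⟨i0, Finset.mem_univ _⟩
  have hvi : 0 < |v i| := lt_of_lt_of_le (abs_pos.mpr hi0) (hi i0 (Finset.mem_univ _))
  have h1 : |r| * |v i| ≤ (∑ j, |B i j|) * |v i| := by
    have := congrFun hBv i
    simp only [mulVec, dotProduct, Pi.smul_apply, smul_eq_mul] at this
    calc |r| * |v i| = |∑ j, B i j * v j| := by rw [← abs_mul, ← this]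
    _ ≤ ∑ j, |B i j * v j| := Finset.abs_sum_le_sum_abs _ _
    _ ≤ ∑ j, |B i j| * |v i| := by
        refine Finset.sum_le_sum fun j _ => ?_
        rw [abs_mul]
        exact mul_le_mul_of_nonneg_left (hi j (Finset.mem_univ _)) (abs_nonneg _)
    _ = (∑ j, |B i j|) * |v i| := by rw [Finset.sum_mul]
  have h2 : |r| ≤ ∑ j, |B i j| := le_of_mul_le_mul_right h1 hvi
  calc r ≤ |r| := le_abs_self r
  _ ≤ ∑ j, |B i j| := h2
  _ ≤ ∑ i, ∑ j, |B i j| := Finset.single_le_sum (f := fun i => ∑ j, |B i j|)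
      (fun i _ => Finset.sum_nonneg fun j _ => abs_nonneg _) (Finset.mem_univ i)

lemma eigenvalue_le_lamMax {n : ℕ} {B : Matrix (Fin n) (Fin n) ℝ} (hB : B.IsHermitian)
    (i : Fin n) : hB.eigenvalues i ≤ lamMax B := by
  refine le_csSup (eigSet_bddAbove B) ?_
  refine ⟨hB.eigenvectorBasis i, ?_, hB.mulVec_eigenvectorBasis i⟩
  intro h
  exact hB.eigenvectorBasis.orthonormal.ne_zero i (by ext j; exact congrFun h j)

lemma lamMax_nonneg {n : ℕ} (hn : 0 < n) {B : Matrix (Fin n) (Fin n) ℝ}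
    (hB : B.PosSemidef) : 0 ≤ lamMax B :=
  le_trans (hB.eigenvalues_nonneg ⟨0, hn⟩) (eigenvalue_le_lamMax hB.1 _)

lemma rayleigh_le_lamMax {n : ℕ} {B : Matrix (Fin n) (Fin n) ℝ} (hB : B.IsHermitian)
    (v : Fin n → ℝ) : v ⬝ᵥ (B *ᵥ v) ≤ lamMax B * (v ⬝ᵥ v) := by
  classical
  set U : Matrix (Fin n) (Fin n) ℝ := (hB.eigenvectorUnitary : Matrix (Fin n) (Fin n) ℝ)
  have hU : U * star U = 1 := mem_unitaryGroup_iff.mp hB.eigenvectorUnitary.2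
  set w : Fin n → ℝ := star U *ᵥ v with hw
  have hsUv : v ᵥ* U = w := by
    ext j
    simp [w, vecMul, mulVec, dotProduct, star_apply, mul_comm]
  have hkey : v ⬝ᵥ (B *ᵥ v) = ∑ i, hB.eigenvalues i * (w i * w i) := by
    conv_lhs => rw [hB.spectral_theorem, Unitary.conjStarAlgAut_apply]
    rw [← mulVec_mulVec, ← mulVec_mulVec, dotProduct_mulVec, hsUv]
    simp only [mulVec_diagonal, dotProduct, Function.comp_apply, RCLike.ofReal_real_eq_id, id_eq]
    refine Finset.sum_congr rfl fun i _ => ?_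
    show w i * (hB.eigenvalues i * w i) = _
    ring
  have hww : w ⬝ᵥ w = v ⬝ᵥ v := by
    nth_rewrite 1 [← hsUv]
    rw [← dotProduct_mulVec, hw, mulVec_mulVec, hU, one_mulVec]
  rw [hkey, ← hww]
  have : lamMax B * (w ⬝ᵥ w) = ∑ i, lamMax B * (w i * w i) := by
    simp [dotProduct, Finset.mul_sum]
  rw [this]
  refine Finset.sum_le_sum fun i _ => ?_
  exact mul_le_mul_of_nonneg_right (eigenvalue_le_lamMax hB i) (mul_self_nonneg _)

lemma posSemidef_smul_real {n : ℕ} {M : Matrix (Fin n) (Fin n) ℝ} (hM : M.PosSemidef)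
    {a : ℝ} (ha : 0 ≤ a) : (a • M).PosSemidef := by
  refine .of_dotProduct_mulVec_nonneg ?_ fun x => ?_
  · unfold Matrix.IsHermitian
    rw [conjTranspose_smul, hM.1.eq]
    simp
  · rw [smul_mulVec, dotProduct_smul]
    exact mul_nonneg ha (hM.dotProduct_mulVec_nonneg x)

lemma lamMax_le_smul_lamMax {n : ℕ} (hn : 0 < n) (X A : Matrix (Fin n) (Fin n) ℝ)
    (hA : A.PosSemidef) {s : ℝ} (hs : 0 ≤ s) (hXA : (s • A - X).PosSemidef) :
    lamMax X ≤ s * lamMax A := by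
  have hAmax : 0 ≤ lamMax A := lamMax_nonneg hn hA
  refine Real.sSup_le ?_ (mul_nonneg hs hAmax)
  rintro r ⟨v, hv, hXv⟩
  have hvv : 0 < v ⬝ᵥ v := by
    have := dotProduct_star_self_pos_iff (v := v) |>.mpr hv
    simpa using this
  have h1 : r * (v ⬝ᵥ v) = v ⬝ᵥ (X *ᵥ v) := by
    rw [hXv, dotProduct_smul]
    simp [mul_comm]
  have h2 : v ⬝ᵥ (X *ᵥ v) ≤ s * (v ⬝ᵥ (A *ᵥ v)) := by
    have := hXA.dotProduct_mulVec_nonneg v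
    simp only [star_trivial, sub_mulVec, dotProduct_sub, smul_mulVec,
      dotProduct_smul, smul_eq_mul] at this
    linarith
  have h3 : v ⬝ᵥ (A *ᵥ v) ≤ lamMax A * (v ⬝ᵥ v) := rayleigh_le_lamMax hA.1 v
  have : r * (v ⬝ᵥ v) ≤ s * lamMax A * (v ⬝ᵥ v) := by nlinarith
  exact le_of_mul_le_mul_right this hvv
/-- Comparison of the complexity constants
`c₁ = (n/τ)² λ_max(((τ−1)/(n−1))M + ((n−τ)/(n−1))Diag(M))` (τ-nice sampling) and
`c₂ = λ_max(M + ((n−τ)/τ)Diag(M))` (independent uniform sampling):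
`c₂ ≤ ((n−1)τ/(n(τ−1))) c₁ ≤ 2 c₁`. -/
theorem c2_le_c1
    (n : ℕ) (hn : 0 < n)
    (M : Matrix (Fin n) (Fin n) ℝ) (hM : M.PosSemidef) (hMdiag : ∀ i, 0 < M i i)
    (τ : ℝ) (hτ2 : 2 ≤ τ) (hτn : τ ≤ n) :
    let c₁ : ℝ := ((n : ℝ) / τ) ^ 2 *
      lamMax ((((τ : ℝ) - 1) / ((n : ℝ) - 1)) • M +
        (((n : ℝ) - τ) / ((n : ℝ) - 1)) • Matrix.diagonal (fun i => M i i))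
    let c₂ : ℝ := lamMax (M + (((n : ℝ) - τ) / τ) • Matrix.diagonal (fun i => M i i))
    c₂ ≤ (((n : ℝ) - 1) * τ / ((n : ℝ) * (τ - 1))) * c₁ ∧
    (((n : ℝ) - 1) * τ / ((n : ℝ) * (τ - 1))) * c₁ ≤ 2 * c₁ := by
  intro c₁ c₂
  have hN2 : (2 : ℝ) ≤ (n : ℝ) := le_trans hτ2 hτn
  have hτ0 : (0 : ℝ) < τ := by linarith
  have hτ1 : (0 : ℝ) < τ - 1 := by linarith
  have hN0 : (0 : ℝ) < (n : ℝ) := by linarith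
  have hN1 : (0 : ℝ) < (n : ℝ) - 1 := by linarith
  have hNτ : (0 : ℝ) ≤ (n : ℝ) - τ := by linarith
  set D : Matrix (Fin n) (Fin n) ℝ := Matrix.diagonal (fun i => M i i) with hDdef
  have hD : D.PosSemidef := Matrix.PosSemidef.diagonal (fun i => (hMdiag i).le)
  set A : Matrix (Fin n) (Fin n) ℝ :=
    (((τ : ℝ) - 1) / ((n : ℝ) - 1)) • M + (((n : ℝ) - τ) / ((n : ℝ) - 1)) • D with hAdef
  set Y : Matrix (Fin n) (Fin n) ℝ := M + (((n : ℝ) - τ) / τ) • D with hYdef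
  have hA : A.PosSemidef :=
    (posSemidef_smul_real hM (div_nonneg (by linarith) hN1.le)).add
      (posSemidef_smul_real hD (div_nonneg hNτ hN1.le))
  set k : ℝ := ((n : ℝ) - 1) * τ / ((n : ℝ) * (τ - 1)) with hkdef
  have hk0 : 0 ≤ k := div_nonneg (mul_nonneg (by linarith) hτ0.le)
    (mul_nonneg hN0.le hτ1.le)
  set s : ℝ := k * ((n : ℝ) / τ) ^ 2 with hsdef
  have hs0 : 0 ≤ s := mul_nonneg hk0 (sq_nonneg _)
  have hc1 : s * ((τ - 1) / ((n : ℝ) - 1)) - 1 = ((n : ℝ) - τ) / τ := by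
    rw [hsdef, hkdef]
    field_simp

  have hc2 : s * (((n : ℝ) - τ) / ((n : ℝ) - 1)) - ((n : ℝ) - τ) / τ
      = (((n : ℝ) - τ) * ((n : ℝ) - τ + 1)) / (τ * (τ - 1)) := by
    rw [hsdef, hkdef]
    field_simp
    ring
  have hrepr : s • A - Y = (s * ((τ - 1) / ((n : ℝ) - 1)) - 1) • M
      + (s * (((n : ℝ) - τ) / ((n : ℝ) - 1)) - ((n : ℝ) - τ) / τ) • D := by
    rw [hAdef, hYdef]
    module
  have hdiff : (s • A - Y).PosSemidef := by
    rw [hrepr, hc1, hc2]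
    exact (posSemidef_smul_real hM (div_nonneg hNτ hτ0.le)).add
      (posSemidef_smul_real hD (div_nonneg (mul_nonneg hNτ (by linarith))
        (mul_nonneg hτ0.le hτ1.le)))
  have hmain : lamMax Y ≤ s * lamMax A := lamMax_le_smul_lamMax hn Y A hA hs0 hdiff
  have hc₁ : c₁ = ((n : ℝ) / τ) ^ 2 * lamMax A := rfl
  have hc₂ : c₂ = lamMax Y := rfl
  constructor
  · rw [hc₂, hc₁]
    calc lamMax Y ≤ s * lamMax A := hmain
    _ = k * (((n : ℝ) / τ) ^ 2 * lamMax A) := by rw [hsdef]; ring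
  · have hc₁0 : 0 ≤ c₁ := by
      rw [hc₁]
      exact mul_nonneg (sq_nonneg _) (lamMax_nonneg hn hA)
    have hk2 : k ≤ 2 := by
      rw [hkdef, div_le_iff₀ (by positivity)]
      nlinarith
    exact mul_le_mul_of_nonneg_right hk2 hc₁0
end
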